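/- Let S ∈ Mat(2n,ℝ) be a Hamiltonian matrix which is hyperbolic. Then V^−(S) = {v ∈ ℝ^{2n} : exp(tS)v → 0 as t → +∞} is a Lagrangian subspace of (ℝ^{2n}, ω): it is isotropic and has dimension n. -/

import Mathlib

open Matrix Filter Topology


/-- The standard complex structure `J = [[0, -Iₙ],[Iₙ, 0]]` on `ℝ^{2n}`. -/
noncomputable def Jmat (n : ℕ) : Matrix (Fin (2*n)) (Fin (2*n)) ℝ :=
  Matrix.reindex (finSumFinEquiv.trans (finCongr (two_mul n).symm))
    (finSumFinEquiv.trans (finCongr (two_mul n).symm))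
    (Matrix.fromBlocks 0 (-1) 1 0)

/-- The standard symplectic form `ω(u,v) = ⟨Ju, v⟩` on `ℝ^{2n}`. -/
noncomputable def symplForm (n : ℕ) (u v : Fin (2*n) → ℝ) : ℝ :=
  (Jmat n) *ᵥ u ⬝ᵥ v

/-- A real matrix is hyperbolic if no eigenvalue of its complexification is purely imaginary. -/
def IsHyperbolic {d : ℕ} (T : Matrix (Fin d) (Fin d) ℝ) : Prop :=
  ∀ μ : ℂ, Module.End.HasEigenvalue (Matrix.toLin' (T.map Complex.ofReal)) μ → μ.re ≠ 0

/-- `V⁻(T)`: vectors whose trajectory under `exp(tT)` tends to `0` as `t → +∞`. -/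
def negSpace (d : ℕ) (T : Matrix (Fin d) (Fin d) ℝ) : Submodule ℝ (Fin d → ℝ) where
  carrier := {v | Tendsto (fun t : ℝ => NormedSpace.exp (t • T) *ᵥ v) atTop (nhds 0)}
  add_mem' := by
    intro a b ha hb
    simpa [Matrix.mulVec_add] using ha.add hb
  zero_mem' := by
    simpa [Matrix.mulVec_zero] using
      (tendsto_const_nhds : Tendsto (fun _ : ℝ => (0 : Fin d → ℝ)) atTop (nhds 0))
  smul_mem' := by
    intro c a ha
    simpa [Matrix.mulVec_smul] using ha.const_smul c

/-- `V⁺(T)`: vectors whose trajectory under `exp(tT)` tends to `0` as `t → -∞`. -/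
def posSpace (d : ℕ) (T : Matrix (Fin d) (Fin d) ℝ) : Submodule ℝ (Fin d → ℝ) where
  carrier := {v | Tendsto (fun t : ℝ => NormedSpace.exp (t • T) *ᵥ v) atBot (nhds 0)}
  add_mem' := by
    intro a b ha hb
    simpa [Matrix.mulVec_add] using ha.add hb
  zero_mem' := by
    simpa [Matrix.mulVec_zero] using
      (tendsto_const_nhds : Tendsto (fun _ : ℝ => (0 : Fin d → ℝ)) atBot (nhds 0))
  smul_mem' := by
    intro c a ha
    simpa [Matrix.mulVec_smul] using ha.const_smul c

section AuxProofs

open NormedSpace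

attribute [local instance] Matrix.linftyOpSemiNormedRing Matrix.linftyOpNormedRing
  Matrix.linftyOpNormedAlgebra

lemma Jmat_eq (n : ℕ) : Jmat n = Matrix.reindexAlgEquiv ℝ ℝ
    (finSumFinEquiv.trans (finCongr (two_mul n).symm)) (Matrix.J (Fin n) ℝ) := rfl

lemma Jmat_mul_Jmat (n : ℕ) : Jmat n * Jmat n = -1 := by
  rw [Jmat_eq, ← _root_.map_mul, Matrix.J_squared, _root_.map_neg, _root_.map_one]

lemma Jmat_transpose (n : ℕ) : (Jmat n)ᵀ = -(Jmat n) := by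
  rw [Jmat_eq, Matrix.reindexAlgEquiv_apply, Matrix.reindex_apply, Matrix.transpose_submatrix,
    Matrix.J_transpose]
  rfl

noncomputable def Junit (n : ℕ) : (Matrix (Fin (2*n)) (Fin (2*n)) ℝ)ˣ where
  val := Jmat n
  inv := -(Jmat n)
  val_inv := by rw [Matrix.mul_neg, Jmat_mul_Jmat, neg_neg]
  inv_val := by rw [Matrix.neg_mul, Jmat_mul_Jmat, neg_neg]

lemma exp_symp (n : ℕ) (S : Matrix (Fin (2*n)) (Fin (2*n)) ℝ)
    (hHam : Sᵀ * Jmat n + Jmat n * S = 0) (t : ℝ) :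
    (exp (t • S))ᵀ * Jmat n * exp (t • S) = Jmat n := by
  have hST : Sᵀ = Jmat n * S * Jmat n := by
    have h1 : Sᵀ * Jmat n = -(Jmat n * S) := eq_neg_of_add_eq_zero_left hHam
    calc Sᵀ = Sᵀ * 1 := by rw [Matrix.mul_one]
    _ = Sᵀ * -(Jmat n * Jmat n) := by rw [Jmat_mul_Jmat]; simp
    _ = -(Sᵀ * Jmat n) * Jmat n := by
        rw [Matrix.mul_neg, Matrix.neg_mul, Matrix.mul_assoc]
    _ = Jmat n * S * Jmat n := by rw [h1, neg_neg]
  have hconj : (t • S)ᵀ = ((Junit n)⁻¹).1 * (-(t • S)) * ((Junit n) : Matrix _ _ ℝ) := by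
    show (t • S)ᵀ = -(Jmat n) * (-(t • S)) * Jmat n
    show t • Sᵀ = -(Jmat n) * (-(t • S)) * Jmat n
    rw [hST]
    simp [Matrix.neg_mul, Matrix.mul_neg, Matrix.mul_smul, Matrix.smul_mul, Matrix.mul_assoc]
  have hexpT : (exp (t • S))ᵀ = -(Jmat n) * exp (-(t • S)) * Jmat n := by
    rw [← Matrix.exp_transpose, hconj, Matrix.exp_units_conj' (Junit n)]
    rfl
  rw [hexpT]
  have hcomm : Commute (-(t • S)) (t • S) := (Commute.refl (t • S)).neg_left
  calc -(Jmat n) * exp (-(t • S)) * Jmat n * Jmat n * exp (t • S)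
      = -(Jmat n) * exp (-(t • S)) * (Jmat n * Jmat n) * exp (t • S) := by
        rw [Matrix.mul_assoc (-(Jmat n) * exp (-(t • S)))]
    _ = Jmat n * (exp (-(t • S)) * exp (t • S)) := by
        rw [Jmat_mul_Jmat]; simp [Matrix.mul_assoc]
    _ = Jmat n := by
        rw [← Matrix.exp_add_of_commute _ _ hcomm, neg_add_cancel, exp_zero, Matrix.mul_one]

lemma dot_aux {d : ℕ} (A B : Matrix (Fin d) (Fin d) ℝ) (u v : Fin d → ℝ) :
    (A *ᵥ u) ⬝ᵥ (B *ᵥ v) = ((Bᵀ * A) *ᵥ u) ⬝ᵥ v := by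
  rw [Matrix.dotProduct_mulVec, ← Matrix.mulVec_transpose, Matrix.mulVec_mulVec]

lemma form_invariant (n : ℕ) (S : Matrix (Fin (2*n)) (Fin (2*n)) ℝ)
    (hHam : Sᵀ * Jmat n + Jmat n * S = 0) (t : ℝ) (u v : Fin (2*n) → ℝ) :
    symplForm n (exp (t • S) *ᵥ u) (exp (t • S) *ᵥ v) = symplForm n u v := by
  unfold symplForm
  rw [Matrix.mulVec_mulVec, dot_aux, ← Matrix.mul_assoc, exp_symp n S hHam t]

lemma tendsto_mulVec_zero {d : ℕ} {α : Type*} {l : Filter α} (A : Matrix (Fin d) (Fin d) ℝ)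
    {f : α → Fin d → ℝ} (h : Tendsto f l (nhds 0)) :
    Tendsto (fun t => A *ᵥ f t) l (nhds 0) := by
  have hc : Continuous (fun w : Fin d → ℝ => A *ᵥ w) :=
    LinearMap.continuous_of_finiteDimensional (Matrix.mulVecLin A)
  have := (hc.tendsto 0).comp h
  simpa [Matrix.mulVec_zero, Function.comp_def] using this

lemma tendsto_dot {d : ℕ} {α : Type*} {l : Filter α} {f g : α → Fin d → ℝ} {a b : Fin d → ℝ}
    (hf : Tendsto f l (nhds a)) (hg : Tendsto g l (nhds b)) :
    Tendsto (fun t => f t ⬝ᵥ g t) l (nhds (a ⬝ᵥ b)) := by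
  simp only [dotProduct]
  exact tendsto_finset_sum _ fun i _ =>
    ((tendsto_pi_nhds.1 hf i).mul (tendsto_pi_nhds.1 hg i))

lemma isotropic_of_tendsto (n : ℕ) (S : Matrix (Fin (2*n)) (Fin (2*n)) ℝ)
    (hHam : Sᵀ * Jmat n + Jmat n * S = 0) (l : Filter ℝ) [l.NeBot] (u v : Fin (2*n) → ℝ)
    (hu : Tendsto (fun t => exp (t • S) *ᵥ u) l (nhds 0))
    (hv : Tendsto (fun t => exp (t • S) *ᵥ v) l (nhds 0)) :
    symplForm n u v = 0 := by
  have h1 : Tendsto (fun t => symplForm n (exp (t • S) *ᵥ u) (exp (t • S) *ᵥ v))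
      l (nhds 0) := by
    have := tendsto_dot (tendsto_mulVec_zero (Jmat n) hu) hv
    simpa [symplForm] using this
  have h3 : Tendsto (fun _ : ℝ => symplForm n u v) l (nhds 0) :=
    h1.congr (fun t => form_invariant n S hHam t u v)
  exact (tendsto_nhds_unique tendsto_const_nhds h3)

lemma symplForm_skew (n : ℕ) (u v : Fin (2*n) → ℝ) : symplForm n v u = -symplForm n u v := by
  unfold symplForm
  rw [dotProduct_comm, Matrix.dotProduct_mulVec, ← Matrix.mulVec_transpose,
    Jmat_transpose, Matrix.neg_mulVec, neg_dotProduct]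

lemma isotropic_finrank_le (n : ℕ) (W : Submodule ℝ (Fin (2*n) → ℝ))
    (h : ∀ u ∈ W, ∀ v ∈ W, symplForm n u v = 0) : Module.finrank ℝ W ≤ n := by
  set B : LinearMap.BilinForm ℝ (Fin (2*n) → ℝ) := Matrix.toBilin' (Jmat n) with hB
  have hBapp : ∀ u v, B u v = symplForm n v u := by
    intro u v
    rw [hB, Matrix.toBilin'_apply']
    unfold symplForm
    rw [dotProduct_comm]
  have h2 : (Jmat n).det * (Jmat n).det = 1 := by
    rw [← Matrix.det_mul, Jmat_mul_Jmat]
    have : (-1 : Matrix (Fin (2*n)) (Fin (2*n)) ℝ) = -(1 : Matrix _ _ ℝ) := rfl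
    rw [this, Matrix.det_neg, Matrix.det_one, Fintype.card_fin, mul_one]
    exact (even_two_mul n).neg_one_pow
  have hdet : (Jmat n).det ≠ 0 := by
    intro h0
    rw [h0, zero_mul] at h2
    exact zero_ne_one h2
  have hnd : B.Nondegenerate := LinearMap.BilinForm.nondegenerate_toBilin'_iff_det_ne_zero.2 hdet
  have hrefl : B.IsRefl := by
    intro u v huv
    rw [hBapp] at huv ⊢
    rw [symplForm_skew] at huv
    rw [show symplForm n u v = -(-(symplForm n u v)) by ring, huv, neg_zero]
  have hle : W ≤ B.orthogonal W := by
    intro x hx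
    rw [LinearMap.BilinForm.mem_orthogonal_iff]
    intro y hy
    show B y x = 0
    rw [hBapp]
    exact h x hx y hy
  have hmono := Submodule.finrank_mono hle
  rw [LinearMap.BilinForm.finrank_orthogonal hnd W] at hmono
  have htot : Module.finrank ℝ (Fin (2*n) → ℝ) = 2*n := by
    simp [Module.finrank_fin_fun]
  rw [htot] at hmono
  omega


lemma pow_mul_exp_tendsto (j : ℕ) {c : ℝ} (hc : c < 0) :
    Tendsto (fun t : ℝ => t ^ j * Real.exp (c * t)) atTop (nhds 0) := by
  have hpos : (0 : ℝ) < -c := neg_pos.2 hc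
  have h1 : Tendsto (fun t : ℝ => -c * t) atTop atTop :=
    Tendsto.const_mul_atTop hpos tendsto_id
  have h2 := (Real.tendsto_pow_mul_exp_neg_atTop_nhds_zero j).comp h1
  have h3 := h2.const_mul (((-c) ^ j)⁻¹)
  rw [mul_zero] at h3
  refine h3.congr fun t => ?_
  simp only [Function.comp]
  rw [mul_pow]
  have hne : ((-c) ^ j) ≠ 0 := pow_ne_zero _ (ne_of_gt hpos)
  field_simp

lemma complex_coef_tendsto (j : ℕ) {μ : ℂ} (hμ : μ.re < 0) :
    Tendsto (fun t : ℝ => Complex.exp ((t : ℂ) * μ) * (t : ℂ) ^ j) atTop (nhds 0) := by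
  rw [tendsto_zero_iff_norm_tendsto_zero]
  have key : ∀ t : ℝ, 0 ≤ t → ‖Complex.exp ((t : ℂ) * μ) * (t : ℂ) ^ j‖
      = t ^ j * Real.exp (μ.re * t) := by
    intro t ht
    rw [norm_mul, norm_pow, Complex.norm_exp,
      Complex.norm_real, Real.norm_of_nonneg ht]
    have : ((t : ℂ) * μ).re = μ.re * t := by simp [mul_comm]
    rw [this, mul_comm]
  have h := pow_mul_exp_tendsto j hμ
  refine h.congr' ?_
  filter_upwards [eventually_ge_atTop (0:ℝ)] with t ht
  exact (key t ht).symm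

noncomputable def mulVecLM {d : ℕ} (v : Fin d → ℂ) :
    Matrix (Fin d) (Fin d) ℂ →ₗ[ℂ] (Fin d → ℂ) where
  toFun A := A *ᵥ v
  map_add' A B := Matrix.add_mulVec A B v
  map_smul' c A := Matrix.smul_mulVec c A v

lemma exp_mulVec_eq {d : ℕ} (k : ℕ) (M : Matrix (Fin d) (Fin d) ℂ) (μ : ℂ)
    (v : Fin d → ℂ) (hv : ((M - μ • 1) ^ k) *ᵥ v = 0) (t : ℝ) :
    exp (t • M) *ᵥ v = ∑ j ∈ Finset.range k,
      (Complex.exp ((t:ℂ) * μ) * (t:ℂ) ^ j * ((j.factorial : ℂ))⁻¹) •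
        ((M - μ • 1) ^ j *ᵥ v) := by
  set N : Matrix (Fin d) (Fin d) ℂ := M - μ • 1 with hN
  have hsmul : t • M = ((t:ℂ) * μ) • (1 : Matrix (Fin d) (Fin d) ℂ) + (t:ℂ) • N := by
    ext i j
    simp only [Matrix.add_apply, Matrix.smul_apply, hN, Matrix.sub_apply, Matrix.one_apply]
    by_cases h : i = j <;> simp [h, Complex.real_smul] <;> ring
  have hcomm : Commute (((t:ℂ) * μ) • (1 : Matrix (Fin d) (Fin d) ℂ)) ((t:ℂ) • N) := by
    show _ * _ = _ * _
    rw [Matrix.smul_mul, Matrix.one_mul, Matrix.mul_smul, Matrix.mul_one]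
  have hexp1 : exp (((t:ℂ) * μ) • (1 : Matrix (Fin d) (Fin d) ℂ))
      = Complex.exp ((t:ℂ) * μ) • (1 : Matrix (Fin d) (Fin d) ℂ) := by
    have h1 : ((t:ℂ) * μ) • (1 : Matrix (Fin d) (Fin d) ℂ)
        = algebraMap ℂ (Matrix (Fin d) (Fin d) ℂ) ((t:ℂ) * μ) := by
      rw [Algebra.algebraMap_eq_smul_one]
    erw [h1, ← map_exp (algebraMap ℂ (Matrix (Fin d) (Fin d) ℂ)) (continuous_algebraMap _ _),
      Algebra.algebraMap_eq_smul_one]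
    congr 1
    rw [Complex.exp_eq_exp_ℂ]
  have hsplit : exp (t • M) = Complex.exp ((t:ℂ) * μ) • exp ((t:ℂ) • N) := by
    rw [hsmul, Matrix.exp_add_of_commute _ _ hcomm, hexp1, Matrix.smul_mul, Matrix.one_mul]
  rw [hsplit, Matrix.smul_mulVec]
  -- now compute exp ((t:ℂ) • N) *ᵥ v
  have hser : exp ((t:ℂ) • N) *ᵥ v
      = ∑ j ∈ Finset.range k, ((t:ℂ) ^ j * ((j.factorial : ℂ))⁻¹) • (N ^ j *ᵥ v) := by
    have hsum : Summable fun j : ℕ => ((j.factorial : ℝ))⁻¹ • ((t:ℂ) • N) ^ j :=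
      NormedSpace.expSeries_summable' (𝕂 := ℝ) ((t:ℂ) • N)
    have hcont : Continuous (mulVecLM (d := d) v) :=
      LinearMap.continuous_of_finiteDimensional _
    have := hsum.hasSum.mapL (LinearMap.toContinuousLinearMap (mulVecLM (d := d) v))
    rw [exp_eq_tsum ℝ]
    have htsum : (mulVecLM (d := d) v) (∑' j : ℕ, ((j.factorial : ℝ))⁻¹ • ((t:ℂ) • N) ^ j)
        = ∑' j : ℕ, (mulVecLM (d := d) v) (((j.factorial : ℝ))⁻¹ • ((t:ℂ) • N) ^ j) := by
      exact (ContinuousLinearMap.map_tsum (LinearMap.toContinuousLinearMap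
        (mulVecLM (d := d) v)) hsum)
    have happ : ∀ (A : Matrix (Fin d) (Fin d) ℂ), (mulVecLM (d := d) v) A = A *ᵥ v := fun _ => rfl
    rw [← happ, htsum]
    have hterm : ∀ j : ℕ, (mulVecLM (d := d) v) (((j.factorial : ℝ))⁻¹ • ((t:ℂ) • N) ^ j)
        = ((t:ℂ) ^ j * ((j.factorial : ℂ))⁻¹) • (N ^ j *ᵥ v) := by
      intro j
      rw [happ, smul_pow]
      ext i
      simp only [Matrix.smul_mulVec, Pi.smul_apply, Complex.real_smul, smul_eq_mul]
      push_cast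
      ring
    rw [tsum_congr hterm]
    refine tsum_eq_sum ?_
    intro j hj
    have hjk : k ≤ j := by
      by_contra hlt
      exact hj (Finset.mem_range.2 (lt_of_not_ge hlt))
    have : N ^ j *ᵥ v = 0 := by
      have : N ^ j = N ^ (j - k) * N ^ k := by
        rw [← pow_add]
        congr 1
        omega
      rw [this, ← Matrix.mulVec_mulVec, hv, Matrix.mulVec_zero]
    rw [this, smul_zero]
  rw [hser, Finset.smul_sum]
  refine Finset.sum_congr rfl fun j _ => ?_
  rw [smul_smul, mul_assoc]

lemma key_tendsto {d : ℕ} (M : Matrix (Fin d) (Fin d) ℂ) (μ : ℂ) (hμ : μ.re < 0)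
    (v : Fin d → ℂ) (k : ℕ) (hv : ((M - μ • 1) ^ k) *ᵥ v = 0) :
    Tendsto (fun t : ℝ => exp (t • M) *ᵥ v) atTop (nhds 0) := by
  have heq : ∀ t : ℝ, exp (t • M) *ᵥ v = ∑ j ∈ Finset.range k,
      (Complex.exp ((t:ℂ) * μ) * (t:ℂ) ^ j * ((j.factorial : ℂ))⁻¹) •
        ((M - μ • 1) ^ j *ᵥ v) := fun t => exp_mulVec_eq k M μ v hv t
  rw [show (0 : Fin d → ℂ) = ∑ j ∈ Finset.range k, (0 : Fin d → ℂ) by simp]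
  refine Tendsto.congr (fun t => (heq t).symm) (tendsto_finset_sum _ fun j _ => ?_)
  have hc : Tendsto (fun t : ℝ => Complex.exp ((t:ℂ) * μ) * (t:ℂ) ^ j
      * ((j.factorial : ℂ))⁻¹) atTop (nhds 0) := by
    have := (complex_coef_tendsto j hμ).mul_const (((j.factorial : ℂ))⁻¹)
    simpa using this
  have := hc.smul_const ((M - μ • 1) ^ j *ᵥ v)
  simpa using this


lemma key_tendsto_pos {d : ℕ} (M : Matrix (Fin d) (Fin d) ℂ) (μ : ℂ) (hμ : 0 < μ.re)
    (v : Fin d → ℂ) (k : ℕ) (hv : ((M - μ • 1) ^ k) *ᵥ v = 0) :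
    Tendsto (fun t : ℝ => exp (t • M) *ᵥ v) atBot (nhds 0) := by
  have hneg : ((-M) - (-μ) • 1 : Matrix (Fin d) (Fin d) ℂ) = -(M - μ • 1) := by
    rw [neg_smul, sub_neg_eq_add, neg_sub]
    abel
  have h1 : (((-M) - (-μ) • 1 : Matrix (Fin d) (Fin d) ℂ) ^ k) *ᵥ v = 0 := by
    rw [hneg, neg_pow, ← Matrix.mulVec_mulVec]
    · rw [hv, Matrix.mulVec_zero]
  have h2 := key_tendsto (-M) (-μ) (by simpa using hμ) v k h1
  have h3 := h2.comp tendsto_neg_atBot_atTop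
  refine h3.congr fun t => ?_
  simp only [Function.comp]
  congr 1
  rw [neg_smul, smul_neg, neg_neg]

noncomputable def negSpaceC (d : ℕ) (M : Matrix (Fin d) (Fin d) ℂ) : Submodule ℂ (Fin d → ℂ) where
  carrier := {v | Tendsto (fun t : ℝ => exp (t • M) *ᵥ v) atTop (nhds 0)}
  add_mem' := by
    intro a b ha hb
    simpa [Matrix.mulVec_add] using ha.add hb
  zero_mem' := by
    simpa [Matrix.mulVec_zero] using
      (tendsto_const_nhds : Tendsto (fun _ : ℝ => (0 : Fin d → ℂ)) atTop (nhds 0))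
  smul_mem' := by
    intro c a ha
    simpa [Matrix.mulVec_smul] using ha.const_smul c

noncomputable def posSpaceC (d : ℕ) (M : Matrix (Fin d) (Fin d) ℂ) : Submodule ℂ (Fin d → ℂ) where
  carrier := {v | Tendsto (fun t : ℝ => exp (t • M) *ᵥ v) atBot (nhds 0)}
  add_mem' := by
    intro a b ha hb
    simpa [Matrix.mulVec_add] using ha.add hb
  zero_mem' := by
    simpa [Matrix.mulVec_zero] using
      (tendsto_const_nhds : Tendsto (fun _ : ℝ => (0 : Fin d → ℂ)) atBot (nhds 0))
  smul_mem' := by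
    intro c a ha
    simpa [Matrix.mulVec_smul] using ha.const_smul c

lemma sumC_eq_top {d : ℕ} (S : Matrix (Fin d) (Fin d) ℝ) (hHyp : IsHyperbolic S) :
    negSpaceC d (S.map Complex.ofReal) ⊔ posSpaceC d (S.map Complex.ofReal) = ⊤ := by
  set M := S.map (Complex.ofReal) with hM
  rw [eq_top_iff, ← Module.End.iSup_maxGenEigenspace_eq_top (Matrix.toLin' M)]
  refine iSup_le fun μ => fun x hx => ?_
  rcases (Module.End.mem_maxGenEigenspace _ _ _).1 hx with ⟨k, hk⟩
  have halg : ∀ m : ℕ, Matrix.toLin' ((M - μ • 1) ^ m)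
      = (Matrix.toLin' M - μ • (1 : Module.End ℂ (Fin d → ℂ))) ^ m := by
    have h1 : Matrix.toLin' (M - μ • (1 : Matrix (Fin d) (Fin d) ℂ))
        = Matrix.toLin' M - μ • (1 : Module.End ℂ (Fin d → ℂ)) := by
      rw [map_sub, _root_.map_smul, Matrix.toLin'_one]
      rfl
    intro m
    induction m with
    | zero =>
        rw [pow_zero, pow_zero, Matrix.toLin'_one]
        rfl
    | succ m ih =>
        rw [pow_succ, pow_succ, Matrix.toLin'_mul, ih, h1]
        rfl
  have hmat : ((M - μ • 1) ^ k) *ᵥ x = 0 := by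
    have := congrArg (fun f => f x) (halg k)
    simp only [Matrix.toLin'_apply] at this
    rw [this]
    exact hk
  by_cases hx0 : x = 0
  · simp [hx0]
  · have hgen : Module.End.HasGenEigenvalue (Matrix.toLin' M) μ k := by
      rw [Module.End.hasGenEigenvalue_iff, Submodule.ne_bot_iff]
      exact ⟨x, Module.End.mem_genEigenspace_nat.2 hk, hx0⟩
    have heig := Module.End.hasEigenvalue_of_hasGenEigenvalue hgen
    have hre := hHyp μ heig
    rcases lt_or_gt_of_ne hre with hlt | hgt
    · exact Submodule.mem_sup_left (key_tendsto M μ hlt x k hmat)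
    · exact Submodule.mem_sup_right (key_tendsto_pos M μ hgt x k hmat)

lemma exp_map_ofReal {d : ℕ} (A : Matrix (Fin d) (Fin d) ℝ) :
    (exp A).map Complex.ofReal = exp (A.map Complex.ofReal) := by
  have hc : Continuous (⇑(Complex.ofRealHom.mapMatrix :
      Matrix (Fin d) (Fin d) ℝ →+* Matrix (Fin d) (Fin d) ℂ)) := by
    show Continuous fun B : Matrix (Fin d) (Fin d) ℝ => B.map Complex.ofReal
    exact continuous_id.matrix_map Complex.continuous_ofReal
  exact map_exp Complex.ofRealHom.mapMatrix hc A

lemma smul_map_ofReal {d : ℕ} (t : ℝ) (A : Matrix (Fin d) (Fin d) ℝ) :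
    (t • A).map Complex.ofReal = t • (A.map Complex.ofReal) := by
  ext i j
  simp [Complex.real_smul]

lemma re_mulVec {d : ℕ} (A : Matrix (Fin d) (Fin d) ℝ) (w : Fin d → ℂ) :
    (fun i => ((A.map Complex.ofReal *ᵥ w) i).re) = A *ᵥ (fun i => (w i).re) := by
  funext i
  simp only [Matrix.mulVec, dotProduct, Matrix.map_apply]
  rw [Complex.re_sum]
  exact Finset.sum_congr rfl fun j _ => Complex.re_ofReal_mul _ _

lemma re_mem_aux {d : ℕ} (S : Matrix (Fin d) (Fin d) ℝ) (l : Filter ℝ) {w : Fin d → ℂ}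
    (hw : Tendsto (fun t : ℝ => exp (t • S.map Complex.ofReal) *ᵥ w) l (nhds 0)) :
    Tendsto (fun t : ℝ => exp (t • S) *ᵥ (fun i => (w i).re)) l (nhds 0) := by
  have key : ∀ t : ℝ, exp (t • S) *ᵥ (fun i => (w i).re)
      = fun i => ((exp (t • (S.map Complex.ofReal)) *ᵥ w) i).re := by
    intro t
    rw [← re_mulVec (exp (t • S)) w, exp_map_ofReal, smul_map_ofReal]
  have hcomp : Tendsto (fun t : ℝ =>
      (fun i => ((exp (t • (S.map Complex.ofReal)) *ᵥ w) i).re)) l (nhds 0) := by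
    rw [tendsto_pi_nhds]
    intro i
    have h1 := (tendsto_pi_nhds.1 hw i)
    have := (Complex.continuous_re.tendsto 0).comp h1
    simpa [Function.comp_def] using this
  exact hcomp.congr fun t => (key t).symm

lemma span_top {d : ℕ} (S : Matrix (Fin d) (Fin d) ℝ) (hHyp : IsHyperbolic S) :
    negSpace d S ⊔ posSpace d S = ⊤ := by
  rw [eq_top_iff]
  intro v _
  have hvc : (fun i => ((v i : ℂ))) ∈ negSpaceC d (S.map Complex.ofReal)
      ⊔ posSpaceC d (S.map Complex.ofReal) := by
    rw [sumC_eq_top S hHyp]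
    trivial
  rcases Submodule.mem_sup.1 hvc with ⟨a, ha, b, hb, hab⟩
  refine Submodule.mem_sup.2 ⟨fun i => (a i).re, re_mem_aux S atTop ha,
    fun i => (b i).re, re_mem_aux S atBot hb, ?_⟩
  funext i
  have h := congrFun hab i
  have : (a i).re + (b i).re = v i := by
    rw [← Complex.add_re]
    rw [show a i + b i = ((v i : ℂ)) from h]
    simp
  exact this

/-- For a hyperbolic Hamiltonian matrix `S`, the stable space `V⁻(S)` is a Lagrangian
subspace of `(ℝ^{2n}, ω)`: it is isotropic and has dimension `n`. -/
theorem stmt2 (n : ℕ) (S : Matrix (Fin (2*n)) (Fin (2*n)) ℝ)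
    (hHam : Sᵀ * Jmat n + Jmat n * S = 0) (hHyp : IsHyperbolic S) :
    (∀ u ∈ negSpace (2*n) S, ∀ v ∈ negSpace (2*n) S, symplForm n u v = 0) ∧
    Module.finrank ℝ (negSpace (2*n) S) = n := by
  have hisoN : ∀ u ∈ negSpace (2*n) S, ∀ v ∈ negSpace (2*n) S, symplForm n u v = 0 :=
    fun u hu v hv => isotropic_of_tendsto n S hHam atTop u v hu hv
  have hisoP : ∀ u ∈ posSpace (2*n) S, ∀ v ∈ posSpace (2*n) S, symplForm n u v = 0 :=
    fun u hu v hv => isotropic_of_tendsto n S hHam atBot u v hu hv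
  refine ⟨hisoN, ?_⟩
  have hN := isotropic_finrank_le n _ hisoN
  have hP := isotropic_finrank_le n _ hisoP
  have hsum := Submodule.finrank_sup_add_finrank_inf_eq (negSpace (2*n) S) (posSpace (2*n) S)
  rw [span_top S hHyp] at hsum
  have htop : Module.finrank ℝ (⊤ : Submodule ℝ (Fin (2*n) → ℝ)) = 2*n := by
    rw [finrank_top]
    simp [Module.finrank_fin_fun]
  rw [htop] at hsum
  omega

end AuxProofs
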